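/- Let S₁ and S₂ be commutative semirings (possibly without unit) such that S₁ × S₂ is distributive at (0,0), i.e., for all congruences Θ, Φ, Ψ on S₁ × S₂ one has [(0,0)]((Θ ⊔ Φ) ⊓ Ψ) = [(0,0)]((Θ ⊓ Ψ) ⊔ (Φ ⊓ Ψ)). Then for every congruence Θ on S₁ × S₂ the kernel [(0,0)]Θ is strongly directly decomposable, i.e., [(0,0)]Θ = {a ∈ S₁ | ∃ b c, (a,b) Θ (0,c)} × {e ∈ S₂ | ∃ d f, (d,e) Θ (f,0)}. -/
import Mathlib

/-- Kernel of the first projection: related iff first coordinates agree. -/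
def rho1 (S₁ S₂ : Type*) [NonUnitalCommSemiring S₁] [NonUnitalCommSemiring S₂] :
    RingCon (S₁ × S₂) where
  r x y := x.1 = y.1
  iseqv := ⟨fun _ => rfl, Eq.symm, Eq.trans⟩
  add' h h' := by simp_all
  mul' h h' := by simp_all

/-- Kernel of the second projection: related iff second coordinates agree. -/
def rho2 (S₁ S₂ : Type*) [NonUnitalCommSemiring S₁] [NonUnitalCommSemiring S₂] :
    RingCon (S₁ × S₂) where
  r x y := x.2 = y.2
  iseqv := ⟨fun _ => rfl, Eq.symm, Eq.trans⟩
  add' h h' := by simp_all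
  mul' h h' := by simp_all

theorem stmt_12 {S₁ S₂ : Type*} [NonUnitalCommSemiring S₁] [NonUnitalCommSemiring S₂]
    (hdistrib : ∀ Θ Φ Ψ : RingCon (S₁ × S₂),
      {x : S₁ × S₂ | ((Θ ⊔ Φ) ⊓ Ψ) x (0, 0)} =
        {x : S₁ × S₂ | ((Θ ⊓ Ψ) ⊔ (Φ ⊓ Ψ)) x (0, 0)}) :
    ∀ Θ : RingCon (S₁ × S₂),
      {x : S₁ × S₂ | Θ x (0, 0)} =
        {a : S₁ | ∃ (b c : S₂), Θ (a, b) (0, c)} ×ˢ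
          {e : S₂ | ∃ (d f : S₁), Θ (d, e) (f, 0)} := by
  intro Θ
  set ρ₁ := rho1 S₁ S₂
  set ρ₂ := rho2 S₁ S₂
  ext ⟨a, e⟩
  simp only [Set.mem_setOf_eq, Set.mem_prod]
  constructor
  · intro h
    exact ⟨⟨e, 0, h⟩, ⟨a, 0, h⟩⟩
  · rintro ⟨⟨b, c, hb⟩, ⟨d, f, hd⟩⟩
    -- step 1 : Θ (a,0) (0,0)
    have h1 : Θ (a, 0) (0, 0) := by
      have hmem : ((Θ ⊔ ρ₁) ⊓ ρ₂) (a, 0) (0, 0) := by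
        rw [RingCon.inf_iff_and]
        refine ⟨?_, rfl⟩
        have hΘ : Θ ≤ Θ ⊔ ρ₁ := le_sup_left
        have hρ : ρ₁ ≤ Θ ⊔ ρ₁ := le_sup_right
        have s1 : (Θ ⊔ ρ₁) (a, 0) (a, b) := hρ (show (ρ₁ : RingCon _) (a, 0) (a, b) from rfl)
        have s2 : (Θ ⊔ ρ₁) (a, b) (0, c) := hΘ hb
        have s3 : (Θ ⊔ ρ₁) (0, c) (0, 0) := hρ (show (ρ₁ : RingCon _) (0, c) (0, 0) from rfl)
        exact (Θ ⊔ ρ₁).trans s1 ((Θ ⊔ ρ₁).trans s2 s3)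
      have := hdistrib Θ ρ₁ ρ₂
      have hmem2 : ((Θ ⊓ ρ₂) ⊔ (ρ₁ ⊓ ρ₂)) (a, 0) (0, 0) := by
        have : (a, 0) ∈ {x : S₁ × S₂ | ((Θ ⊓ ρ₂) ⊔ (ρ₁ ⊓ ρ₂)) x (0, 0)} := this ▸ hmem
        exact this
      have hle : (Θ ⊓ ρ₂) ⊔ (ρ₁ ⊓ ρ₂) ≤ Θ := by
        refine sup_le inf_le_left (RingCon.le_def.mpr ?_)
        intro x y hxy
        rw [RingCon.inf_iff_and] at hxy
        have : x = y := Prod.ext hxy.1 hxy.2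
        exact this ▸ Θ.refl x
      exact hle hmem2
    -- step 2 : Θ (0,e) (0,0)
    have h2 : Θ (0, e) (0, 0) := by
      have hmem : ((Θ ⊔ ρ₂) ⊓ ρ₁) (0, e) (0, 0) := by
        rw [RingCon.inf_iff_and]
        refine ⟨?_, rfl⟩
        have hΘ : Θ ≤ Θ ⊔ ρ₂ := le_sup_left
        have hρ : ρ₂ ≤ Θ ⊔ ρ₂ := le_sup_right
        have s1 : (Θ ⊔ ρ₂) (0, e) (d, e) := hρ (show (ρ₂ : RingCon _) (0, e) (d, e) from rfl)
        have s2 : (Θ ⊔ ρ₂) (d, e) (f, 0) := hΘ hd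
        have s3 : (Θ ⊔ ρ₂) (f, 0) (0, 0) := hρ (show (ρ₂ : RingCon _) (f, 0) (0, 0) from rfl)
        exact (Θ ⊔ ρ₂).trans s1 ((Θ ⊔ ρ₂).trans s2 s3)
      have := hdistrib Θ ρ₂ ρ₁
      have hmem2 : ((Θ ⊓ ρ₁) ⊔ (ρ₂ ⊓ ρ₁)) (0, e) (0, 0) := by
        have : (0, e) ∈ {x : S₁ × S₂ | ((Θ ⊓ ρ₁) ⊔ (ρ₂ ⊓ ρ₁)) x (0, 0)} := this ▸ hmem
        exact this
      have hle : (Θ ⊓ ρ₁) ⊔ (ρ₂ ⊓ ρ₁) ≤ Θ := by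
        refine sup_le inf_le_left (RingCon.le_def.mpr ?_)
        intro x y hxy
        rw [RingCon.inf_iff_and] at hxy
        have : x = y := Prod.ext hxy.2 hxy.1
        exact this ▸ Θ.refl x
      exact hle hmem2
    have := Θ.add h1 h2
    simpa using this
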